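/- Let p : E → B be a Hurewicz fibration which is also a homotopy equivalence. Then for every topological space A and every continuous map f : A → B, the first projection from the pullback {(a,e) ∈ A × E : f(a) = p(e)} (with the subspace topology of the product) to A is a homotopy equivalence. -/

import Mathlib

open unitInterval

/-- `p` is a Hurewicz fibration: it has the homotopy lifting property with respect to every
topological space. -/
def IsHurewiczFibration {E B : Type} [TopologicalSpace E] [TopologicalSpace B]
    (p : C(E, B)) : Prop :=
  ∀ (T : Type) [TopologicalSpace T], ∀ (Hm : C(T × I, B)) (h₀ : C(T, E)),
    (∀ t : T, p (h₀ t) = Hm (t, 0)) →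
      ∃ Ht : C(T × I, E), (∀ x : T × I, p (Ht x) = Hm x) ∧ ∀ t : T, Ht (t, 0) = h₀ t

/-- `f` is a homotopy equivalence. -/
def IsHomotopyEquiv {A B : Type} [TopologicalSpace A] [TopologicalSpace B] (f : C(A, B)) : Prop :=
  ∃ g : C(B, A),
    (g.comp f).Homotopic (ContinuousMap.id A) ∧ (f.comp g).Homotopic (ContinuousMap.id B)


section
namespace HPB

noncomputable def mh : ℝ × ℝ → ℝ × ℝ := fun z =>
  if -z.1 ≤ z.2 ∧ z.2 ≤ z.1 then ((2*z.1 - z.2)/3, z.1)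
  else if -z.2 ≤ z.1 ∧ z.1 ≤ z.2 then (z.1/3, z.2)
  else if z.1 ≤ z.2 ∧ z.1 ≤ -z.2 then ((2*z.1 + z.2)/3, -z.1)
  else if 3*z.1 ≤ z.2 then (z.2, 2*z.2 - 3*z.1)
  else if 3*z.1 ≤ -z.2 then (3*z.1, z.2)
  else (-z.2, 3*z.1 + 2*z.2)

noncomputable def wh : ℝ × ℝ → ℝ × ℝ := fun z =>
  if (-z.2 ≤ z.1 ∧ z.1 ≤ z.2) ∧ z.2 ≤ 3*z.1 then (z.2, 2*z.2 - 3*z.1)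
  else if (-z.2 ≤ z.1 ∧ z.1 ≤ z.2) ∧ -z.2 ≤ 3*z.1 then (3*z.1, z.2)
  else if -z.2 ≤ z.1 ∧ z.1 ≤ z.2 then (-z.2, 3*z.1 + 2*z.2)
  else if -z.1 ≤ z.2 ∧ z.2 ≤ z.1 then ((z.2 + 2*z.1)/3, -z.1)
  else if z.1 ≤ z.2 ∧ z.1 ≤ -z.2 then ((2*z.1 - z.2)/3, z.1)
  else (z.1/3, z.2)

lemma mh_R {x y : ℝ} (h1 : -x ≤ y) (h2 : y ≤ x) : mh (x, y) = ((2*x - y)/3, x) := by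
  unfold mh; dsimp only
  rw [if_pos ⟨h1, h2⟩]

lemma mh_T {x y : ℝ} (h1 : -y ≤ x) (h2 : x ≤ y) : mh (x, y) = (x/3, y) := by
  unfold mh; dsimp only
  split_ifs with a1 a2 a3 a4 a5 <;>
    first
      | rfl
      | (refine Prod.ext ?_ ?_ <;> dsimp only <;> linarith [a1.1, a1.2])
      | (exfalso; exact a2 ⟨h1, h2⟩)

lemma mh_L {x y : ℝ} (h1 : x ≤ y) (h2 : x ≤ -y) : mh (x, y) = ((2*x + y)/3, -x) := by
  unfold mh; dsimp only
  split_ifs with a1 a2 a3 a4 a5 <;>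
    first
      | rfl
      | (refine Prod.ext ?_ ?_ <;> dsimp only <;> linarith [a1.1, a1.2])
      | (refine Prod.ext ?_ ?_ <;> dsimp only <;> linarith [a2.1, a2.2])
      | (exfalso; exact a3 ⟨h1, h2⟩)

lemma mh_B1 {x y : ℝ} (h1 : x ≤ -y) (h2 : y ≤ x) (h3 : 3*x ≤ y) :
    mh (x, y) = (y, 2*y - 3*x) := by
  unfold mh; dsimp only
  split_ifs with a1 a2 a3 a4 a5 <;>
    first
      | rfl
      | (refine Prod.ext ?_ ?_ <;> dsimp only <;> linarith [a1.1, a1.2])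
      | (refine Prod.ext ?_ ?_ <;> dsimp only <;> linarith [a2.1, a2.2])
      | (refine Prod.ext ?_ ?_ <;> dsimp only <;> linarith [a3.1, a3.2])
      | (exfalso; exact a4 h3)

lemma mh_B2 {x y : ℝ} (h1 : x ≤ -y) (h2 : y ≤ x) (h3 : y ≤ 3*x) (h4 : 3*x ≤ -y) :
    mh (x, y) = (3*x, y) := by
  unfold mh; dsimp only
  split_ifs with a1 a2 a3 a4 a5 <;>
    first
      | rfl
      | (refine Prod.ext ?_ ?_ <;> dsimp only <;> linarith [a1.1, a1.2])
      | (refine Prod.ext ?_ ?_ <;> dsimp only <;> linarith [a2.1, a2.2])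
      | (refine Prod.ext ?_ ?_ <;> dsimp only <;> linarith [a3.1, a3.2])
      | (refine Prod.ext ?_ ?_ <;> dsimp only <;> linarith)
      | (exfalso; exact a5 h4)

lemma mh_B3 {x y : ℝ} (h1 : x ≤ -y) (h2 : y ≤ x) (h3 : -y ≤ 3*x) :
    mh (x, y) = (-y, 3*x + 2*y) := by
  unfold mh; dsimp only
  split_ifs with a1 a2 a3 a4 a5 <;>
    first
      | rfl
      | (refine Prod.ext ?_ ?_ <;> dsimp only <;> linarith [a1.1, a1.2])
      | (refine Prod.ext ?_ ?_ <;> dsimp only <;> linarith [a2.1, a2.2])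
      | (refine Prod.ext ?_ ?_ <;> dsimp only <;> linarith [a3.1, a3.2])
      | (refine Prod.ext ?_ ?_ <;> dsimp only <;> linarith)

lemma wh_U1 {x y : ℝ} (h1 : -y ≤ x) (h2 : x ≤ y) (h3 : y ≤ 3*x) :
    wh (x, y) = (y, 2*y - 3*x) := by
  unfold wh; dsimp only; rw [if_pos ⟨⟨h1, h2⟩, h3⟩]

lemma wh_U2 {x y : ℝ} (h1 : -y ≤ x) (h2 : x ≤ y) (h3 : 3*x ≤ y) (h4 : -y ≤ 3*x) :
    wh (x, y) = (3*x, y) := by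
  unfold wh; dsimp only; split_ifs with a1 a2 a3 a4 a5
  · refine Prod.ext ?_ ?_ <;> dsimp only <;> linarith [a1.1.1, a1.1.2, a1.2]
  · rfl
  · exact absurd ⟨a3, h4⟩ a2
  · exact absurd ⟨h1, h2⟩ a3
  · exact absurd ⟨h1, h2⟩ a3
  · exact absurd ⟨h1, h2⟩ a3

lemma wh_U3 {x y : ℝ} (h1 : -y ≤ x) (h2 : x ≤ y) (h3 : 3*x ≤ -y) :
    wh (x, y) = (-y, 3*x + 2*y) := by
  unfold wh; dsimp only; split_ifs with a1 a2 a3 a4 a5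
  · refine Prod.ext ?_ ?_ <;> dsimp only <;> linarith [a1.1.1, a1.1.2, a1.2]
  · refine Prod.ext ?_ ?_ <;> dsimp only <;> linarith [a2.1.1, a2.1.2, a2.2]
  · rfl
  · exact absurd ⟨h1, h2⟩ a3
  · exact absurd ⟨h1, h2⟩ a3
  · exact absurd ⟨h1, h2⟩ a3

lemma wh_Rt {x y : ℝ} (h1 : -x ≤ y) (h2 : y ≤ x) :
    wh (x, y) = ((y + 2*x)/3, -x) := by
  unfold wh; dsimp only; split_ifs with a1 a2 a3 a4 a5
  · refine Prod.ext ?_ ?_ <;> dsimp only <;> linarith [a1.1.1, a1.1.2, a1.2]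
  · exact absurd ⟨a2.1, by linarith [a2.1.1, a2.1.2, a2.2]⟩ a1
  · exact absurd ⟨a3, by linarith [a3.1, a3.2]⟩ a1
  · rfl
  · exact absurd ⟨h1, h2⟩ a4
  · exact absurd ⟨h1, h2⟩ a4

lemma wh_Lf {x y : ℝ} (h1 : x ≤ y) (h2 : x ≤ -y) :
    wh (x, y) = ((2*x - y)/3, x) := by
  unfold wh; dsimp only; split_ifs with a1 a2 a3 a4 a5
  · refine Prod.ext ?_ ?_ <;> dsimp only <;> linarith [a1.1.1, a1.1.2, a1.2]
  · refine Prod.ext ?_ ?_ <;> dsimp only <;> linarith [a2.1.1, a2.1.2, a2.2]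
  · refine Prod.ext ?_ ?_ <;> dsimp only <;> linarith [a3.1, a3.2]
  · refine Prod.ext ?_ ?_ <;> dsimp only <;> linarith [a4.1, a4.2]
  · rfl
  · exact absurd ⟨h1, h2⟩ a5

lemma wh_Lo {x y : ℝ} (h1 : y ≤ x) (h2 : y ≤ -x) :
    wh (x, y) = (x/3, y) := by
  unfold wh; dsimp only; split_ifs with a1 a2 a3 a4 a5
  · refine Prod.ext ?_ ?_ <;> dsimp only <;> linarith [a1.1.1, a1.1.2, a1.2]
  · refine Prod.ext ?_ ?_ <;> dsimp only <;> linarith [a2.1.1, a2.1.2, a2.2]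
  · refine Prod.ext ?_ ?_ <;> dsimp only <;> linarith [a3.1, a3.2]
  · refine Prod.ext ?_ ?_ <;> dsimp only <;> linarith [a4.1, a4.2]
  · refine Prod.ext ?_ ?_ <;> dsimp only <;> linarith [a5.1, a5.2]
  · rfl

lemma mh_wh (x y : ℝ) : mh (wh (x, y)) = (x, y) := by
  rcases le_total y x with c1 | c1 <;> rcases le_total (-x) y with c2 | c2
  · -- right cone
    rw [wh_Rt c2 c1, mh_B3 (by linarith) (by linarith) (by linarith)]
    refine Prod.ext ?_ ?_ <;> dsimp only <;> ring
  · -- lower cone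
    rw [wh_Lo c1 c2, mh_B2 (by linarith) (by linarith) (by linarith) (by linarith)]
    refine Prod.ext ?_ ?_ <;> dsimp only <;> ring
  · -- upper cone
    rcases le_total y (3*x) with c3 | c3
    · rw [wh_U1 (by linarith) c1 c3, mh_R (by linarith) (by linarith)]
      refine Prod.ext ?_ ?_ <;> dsimp only <;> ring
    · rcases le_total (-y) (3*x) with c4 | c4
      · rw [wh_U2 (by linarith) c1 c3 c4, mh_T (by linarith) (by linarith)]
        refine Prod.ext ?_ ?_ <;> dsimp only <;> ring
      · rw [wh_U3 (by linarith) c1 c4, mh_L (by linarith) (by linarith)]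
        refine Prod.ext ?_ ?_ <;> dsimp only <;> ring
  · -- left cone
    rw [wh_Lf c1 (by linarith), mh_B1 (by linarith) (by linarith) (by linarith)]
    refine Prod.ext ?_ ?_ <;> dsimp only <;> ring

lemma wh_mh_bot {x : ℝ} (h1 : -1 ≤ x) (h2 : x ≤ 1) : wh (mh (x, -1)) = (x, -1) := by
  rcases le_total x (-1/3) with c1 | c1
  · rw [mh_B1 (by linarith) (by linarith) (by linarith),
      wh_Lf (by linarith) (by linarith)]
    refine Prod.ext ?_ ?_ <;> dsimp only <;> ring
  · rcases le_total x (1/3) with c2 | c2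
    · rw [mh_B2 (by linarith) (by linarith) (by linarith) (by linarith),
        wh_Lo (by linarith) (by linarith)]
      refine Prod.ext ?_ ?_ <;> dsimp only <;> ring
    · rw [mh_B3 (by linarith) (by linarith) (by linarith),
        wh_Rt (by linarith) (by linarith)]
      refine Prod.ext ?_ ?_ <;> dsimp only <;> ring

lemma mh_mem {x y : ℝ} (h1 : -1 ≤ x) (h2 : x ≤ 1) (h3 : -1 ≤ y) (h4 : y ≤ 1) :
    -1 ≤ (mh (x, y)).1 ∧ (mh (x, y)).1 ≤ 1 ∧ -1 ≤ (mh (x, y)).2 ∧ (mh (x, y)).2 ≤ 1 := by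
  rcases le_total y x with c1 | c1 <;> rcases le_total (-x) y with c2 | c2
  · rw [mh_R c2 c1]; refine ⟨?_, ?_, ?_, ?_⟩ <;> dsimp only <;> linarith
  · rcases le_total (3*x) y with c3 | c3
    · rw [mh_B1 (by linarith) (by linarith) c3]
      refine ⟨?_, ?_, ?_, ?_⟩ <;> dsimp only <;> linarith
    · rcases le_total (3*x) (-y) with c4 | c4
      · rw [mh_B2 (by linarith) (by linarith) c3 c4]
        refine ⟨?_, ?_, ?_, ?_⟩ <;> dsimp only <;> linarith
      · rw [mh_B3 (by linarith) (by linarith) c4]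
        refine ⟨?_, ?_, ?_, ?_⟩ <;> dsimp only <;> linarith
  · rw [mh_T (by linarith) c1]; refine ⟨?_, ?_, ?_, ?_⟩ <;> dsimp only <;> linarith
  · rw [mh_L c1 (by linarith)]; refine ⟨?_, ?_, ?_, ?_⟩ <;> dsimp only <;> linarith

lemma wh_mem {x y : ℝ} (h1 : -1 ≤ x) (h2 : x ≤ 1) (h3 : -1 ≤ y) (h4 : y ≤ 1) :
    -1 ≤ (wh (x, y)).1 ∧ (wh (x, y)).1 ≤ 1 ∧ -1 ≤ (wh (x, y)).2 ∧ (wh (x, y)).2 ≤ 1 := by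
  rcases le_total y x with c1 | c1 <;> rcases le_total (-x) y with c2 | c2
  · rw [wh_Rt c2 c1]; refine ⟨?_, ?_, ?_, ?_⟩ <;> dsimp only <;> linarith
  · rw [wh_Lo c1 c2]; refine ⟨?_, ?_, ?_, ?_⟩ <;> dsimp only <;> linarith
  · rcases le_total y (3*x) with c3 | c3
    · rw [wh_U1 (by linarith) c1 c3]; refine ⟨?_, ?_, ?_, ?_⟩ <;> dsimp only <;> linarith
    · rcases le_total (-y) (3*x) with c4 | c4
      · rw [wh_U2 (by linarith) c1 c3 c4]; refine ⟨?_, ?_, ?_, ?_⟩ <;> dsimp only <;> linarith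
      · rw [wh_U3 (by linarith) c1 c4]; refine ⟨?_, ?_, ?_, ?_⟩ <;> dsimp only <;> linarith
  · rw [wh_Lf c1 (by linarith)]; refine ⟨?_, ?_, ?_, ?_⟩ <;> dsimp only <;> linarith


lemma contOn_union {α β : Type*} [TopologicalSpace α] [TopologicalSpace β] {f : α → β}
    {s t : Set α} (hs : IsClosed s) (ht : IsClosed t)
    (hfs : ContinuousOn f s) (hft : ContinuousOn f t) : ContinuousOn f (s ∪ t) := by
  intro z _
  have l1 : ContinuousWithinAt f s z := by
    by_cases h : z ∈ s
    · exact hfs z h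
    · exact continuousWithinAt_of_notMem_closure (by rwa [hs.closure_eq])
  have l2 : ContinuousWithinAt f t z := by
    by_cases h : z ∈ t
    · exact hft z h
    · exact continuousWithinAt_of_notMem_closure (by rwa [ht.closure_eq])
  exact l1.union l2

lemma cont_mh : Continuous mh := by
  rw [← continuousOn_univ]
  have hCR : IsClosed {z : ℝ×ℝ | -z.1 ≤ z.2 ∧ z.2 ≤ z.1} := (IsClosed.inter (s₁ := {z : ℝ×ℝ | -z.1 ≤ z.2}) (s₂ := {z : ℝ×ℝ | z.2 ≤ z.1}) (isClosed_le (by fun_prop) (by fun_prop)) (isClosed_le (by fun_prop) (by fun_prop) : IsClosed {z : ℝ×ℝ | z.2 ≤ z.1}))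
  have hOR : ContinuousOn mh {z : ℝ×ℝ | -z.1 ≤ z.2 ∧ z.2 ≤ z.1} :=
    ContinuousOn.congr (Continuous.continuousOn (f := fun z : ℝ×ℝ => ((2*z.1 - z.2)/3, z.1)) (by fun_prop)) (fun z hz => mh_R hz.1 hz.2)
  have hCT : IsClosed {z : ℝ×ℝ | -z.2 ≤ z.1 ∧ z.1 ≤ z.2} := (IsClosed.inter (s₁ := {z : ℝ×ℝ | -z.2 ≤ z.1}) (s₂ := {z : ℝ×ℝ | z.1 ≤ z.2}) (isClosed_le (by fun_prop) (by fun_prop)) (isClosed_le (by fun_prop) (by fun_prop) : IsClosed {z : ℝ×ℝ | z.1 ≤ z.2}))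
  have hOT : ContinuousOn mh {z : ℝ×ℝ | -z.2 ≤ z.1 ∧ z.1 ≤ z.2} :=
    ContinuousOn.congr (Continuous.continuousOn (f := fun z : ℝ×ℝ => (z.1/3, z.2)) (by fun_prop)) (fun z hz => mh_T hz.1 hz.2)
  have hCL : IsClosed {z : ℝ×ℝ | z.1 ≤ z.2 ∧ z.1 ≤ -z.2} := (IsClosed.inter (s₁ := {z : ℝ×ℝ | z.1 ≤ z.2}) (s₂ := {z : ℝ×ℝ | z.1 ≤ -z.2}) (isClosed_le (by fun_prop) (by fun_prop)) (isClosed_le (by fun_prop) (by fun_prop) : IsClosed {z : ℝ×ℝ | z.1 ≤ -z.2}))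
  have hOL : ContinuousOn mh {z : ℝ×ℝ | z.1 ≤ z.2 ∧ z.1 ≤ -z.2} :=
    ContinuousOn.congr (Continuous.continuousOn (f := fun z : ℝ×ℝ => ((2*z.1 + z.2)/3, -z.1)) (by fun_prop)) (fun z hz => mh_L hz.1 hz.2)
  have hCB1 : IsClosed {z : ℝ×ℝ | z.1 ≤ -z.2 ∧ z.2 ≤ z.1 ∧ 3*z.1 ≤ z.2} := (IsClosed.inter (s₁ := {z : ℝ×ℝ | z.1 ≤ -z.2}) (s₂ := {z : ℝ×ℝ | z.2 ≤ z.1 ∧ 3*z.1 ≤ z.2}) (isClosed_le (by fun_prop) (by fun_prop)) (IsClosed.inter (s₁ := {z : ℝ×ℝ | z.2 ≤ z.1}) (s₂ := {z : ℝ×ℝ | 3*z.1 ≤ z.2}) (isClosed_le (by fun_prop) (by fun_prop)) (isClosed_le (by fun_prop) (by fun_prop) : IsClosed {z : ℝ×ℝ | 3*z.1 ≤ z.2})))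
  have hOB1 : ContinuousOn mh {z : ℝ×ℝ | z.1 ≤ -z.2 ∧ z.2 ≤ z.1 ∧ 3*z.1 ≤ z.2} :=
    ContinuousOn.congr (Continuous.continuousOn (f := fun z : ℝ×ℝ => (z.2, 2*z.2 - 3*z.1)) (by fun_prop)) (fun z hz => mh_B1 hz.1 hz.2.1 hz.2.2)
  have hCB2 : IsClosed {z : ℝ×ℝ | z.1 ≤ -z.2 ∧ z.2 ≤ z.1 ∧ z.2 ≤ 3*z.1 ∧ 3*z.1 ≤ -z.2} := (IsClosed.inter (s₁ := {z : ℝ×ℝ | z.1 ≤ -z.2}) (s₂ := {z : ℝ×ℝ | z.2 ≤ z.1 ∧ z.2 ≤ 3*z.1 ∧ 3*z.1 ≤ -z.2}) (isClosed_le (by fun_prop) (by fun_prop)) (IsClosed.inter (s₁ := {z : ℝ×ℝ | z.2 ≤ z.1}) (s₂ := {z : ℝ×ℝ | z.2 ≤ 3*z.1 ∧ 3*z.1 ≤ -z.2}) (isClosed_le (by fun_prop) (by fun_prop)) (IsClosed.inter (s₁ := {z : ℝ×ℝ | z.2 ≤ 3*z.1}) (s₂ := {z : ℝ×ℝ | 3*z.1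 ≤ -z.2}) (isClosed_le (by fun_prop) (by fun_prop)) (isClosed_le (by fun_prop) (by fun_prop) : IsClosed {z : ℝ×ℝ | 3*z.1 ≤ -z.2}))))
  have hOB2 : ContinuousOn mh {z : ℝ×ℝ | z.1 ≤ -z.2 ∧ z.2 ≤ z.1 ∧ z.2 ≤ 3*z.1 ∧ 3*z.1 ≤ -z.2} :=
    ContinuousOn.congr (Continuous.continuousOn (f := fun z : ℝ×ℝ => (3*z.1, z.2)) (by fun_prop)) (fun z hz => mh_B2 hz.1 hz.2.1 hz.2.2.1 hz.2.2.2)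
  have hCB3 : IsClosed {z : ℝ×ℝ | z.1 ≤ -z.2 ∧ z.2 ≤ z.1 ∧ -z.2 ≤ 3*z.1} := (IsClosed.inter (s₁ := {z : ℝ×ℝ | z.1 ≤ -z.2}) (s₂ := {z : ℝ×ℝ | z.2 ≤ z.1 ∧ -z.2 ≤ 3*z.1}) (isClosed_le (by fun_prop) (by fun_prop)) (IsClosed.inter (s₁ := {z : ℝ×ℝ | z.2 ≤ z.1}) (s₂ := {z : ℝ×ℝ | -z.2 ≤ 3*z.1}) (isClosed_le (by fun_prop) (by fun_prop)) (isClosed_le (by fun_prop) (by fun_prop) : IsClosed {z : ℝ×ℝ | -z.2 ≤ 3*z.1})))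
  have hOB3 : ContinuousOn mh {z : ℝ×ℝ | z.1 ≤ -z.2 ∧ z.2 ≤ z.1 ∧ -z.2 ≤ 3*z.1} :=
    ContinuousOn.congr (Continuous.continuousOn (f := fun z : ℝ×ℝ => (-z.2, 3*z.1 + 2*z.2)) (by fun_prop)) (fun z hz => mh_B3 hz.1 hz.2.1 hz.2.2)
  have hcov : (Set.univ : Set (ℝ×ℝ)) ⊆ ({z : ℝ×ℝ | -z.1 ≤ z.2 ∧ z.2 ≤ z.1} ∪ ({z : ℝ×ℝ | -z.2 ≤ z.1 ∧ z.1 ≤ z.2} ∪ ({z : ℝ×ℝ | z.1 ≤ z.2 ∧ z.1 ≤ -z.2} ∪ ({z : ℝ×ℝ | z.1 ≤ -z.2 ∧ z.2 ≤ z.1 ∧ 3*z.1 ≤ z.2} ∪ ({z : ℝ×ℝ | z.1 ≤ -z.2 ∧ z.2 ≤ z.1 ∧ z.2 ≤ 3*z.1 ∧ 3*z.1 ≤ -z.2} ∪ {z : ℝ×ℝ | z.1 ≤ -z.2 ∧ z.2 ≤ z.1 ∧ -z.2 ≤ 3*z.1}))))) := by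
    intro z _
    rcases le_total z.2 z.1 with c1 | c1 <;> rcases le_total (-z.1) z.2 with c2 | c2
    · exact Or.inl ⟨c2, c1⟩
    · rcases le_total (3*z.1) z.2 with c3 | c3
      · exact Or.inr (Or.inr (Or.inr (Or.inl ⟨by linarith, c1, c3⟩)))
      · rcases le_total (3*z.1) (-z.2) with c4 | c4
        · exact Or.inr (Or.inr (Or.inr (Or.inr (Or.inl ⟨by linarith, c1, c3, c4⟩))))
        · exact Or.inr (Or.inr (Or.inr (Or.inr (Or.inr ⟨by linarith, c1, c4⟩))))
    · exact Or.inr (Or.inl ⟨by linarith, c1⟩)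
    · exact Or.inr (Or.inr (Or.inl ⟨c1, by linarith⟩))
  exact ContinuousOn.mono (contOn_union hCR (hCT.union (hCL.union (hCB1.union (hCB2.union hCB3)))) hOR (contOn_union hCT (hCL.union (hCB1.union (hCB2.union hCB3))) hOT (contOn_union hCL (hCB1.union (hCB2.union hCB3)) hOL (contOn_union hCB1 (hCB2.union hCB3) hOB1 (contOn_union hCB2 hCB3 hOB2 hOB3))))) hcov

lemma cont_wh : Continuous wh := by
  rw [← continuousOn_univ]
  have hCU1 : IsClosed {z : ℝ×ℝ | -z.2 ≤ z.1 ∧ z.1 ≤ z.2 ∧ z.2 ≤ 3*z.1} := (IsClosed.inter (s₁ := {z : ℝ×ℝ | -z.2 ≤ z.1}) (s₂ := {z : ℝ×ℝ | z.1 ≤ z.2 ∧ z.2 ≤ 3*z.1}) (isClosed_le (by fun_prop) (by fun_prop)) (IsClosed.inter (s₁ := {z : ℝ×ℝ | z.1 ≤ z.2}) (s₂ := {z : ℝ×ℝ | z.2 ≤ 3*z.1}) (isClosed_le (by fun_prop) (by fun_prop)) (isClosed_le (by fun_prop) (by fun_prop) : IsClosed {z : ℝ×ℝ | z.2 ≤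 3*z.1})))
  have hOU1 : ContinuousOn wh {z : ℝ×ℝ | -z.2 ≤ z.1 ∧ z.1 ≤ z.2 ∧ z.2 ≤ 3*z.1} :=
    ContinuousOn.congr (Continuous.continuousOn (f := fun z : ℝ×ℝ => (z.2, 2*z.2 - 3*z.1)) (by fun_prop)) (fun z hz => wh_U1 hz.1 hz.2.1 hz.2.2)
  have hCU2 : IsClosed {z : ℝ×ℝ | -z.2 ≤ z.1 ∧ z.1 ≤ z.2 ∧ 3*z.1 ≤ z.2 ∧ -z.2 ≤ 3*z.1} := (IsClosed.inter (s₁ := {z : ℝ×ℝ | -z.2 ≤ z.1}) (s₂ := {z : ℝ×ℝ | z.1 ≤ z.2 ∧ 3*z.1 ≤ z.2 ∧ -z.2 ≤ 3*z.1}) (isClosed_le (by fun_prop) (by fun_prop)) (IsClosed.inter (s₁ := {z : ℝ×ℝ | z.1 ≤ z.2}) (s₂ := {z : ℝ×ℝ | 3*z.1 ≤ z.2 ∧ -z.2 ≤ 3*z.1}) (isClosed_le (by fun_prop) (by fun_prop)) (IsClosed.inter (s₁ := {z : ℝ×ℝ | 3*z.1 ≤ z.2}) (s₂ := {z : ℝ×ℝ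 | -z.2 ≤ 3*z.1}) (isClosed_le (by fun_prop) (by fun_prop)) (isClosed_le (by fun_prop) (by fun_prop) : IsClosed {z : ℝ×ℝ | -z.2 ≤ 3*z.1}))))
  have hOU2 : ContinuousOn wh {z : ℝ×ℝ | -z.2 ≤ z.1 ∧ z.1 ≤ z.2 ∧ 3*z.1 ≤ z.2 ∧ -z.2 ≤ 3*z.1} :=
    ContinuousOn.congr (Continuous.continuousOn (f := fun z : ℝ×ℝ => (3*z.1, z.2)) (by fun_prop)) (fun z hz => wh_U2 hz.1 hz.2.1 hz.2.2.1 hz.2.2.2)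
  have hCU3 : IsClosed {z : ℝ×ℝ | -z.2 ≤ z.1 ∧ z.1 ≤ z.2 ∧ 3*z.1 ≤ -z.2} := (IsClosed.inter (s₁ := {z : ℝ×ℝ | -z.2 ≤ z.1}) (s₂ := {z : ℝ×ℝ | z.1 ≤ z.2 ∧ 3*z.1 ≤ -z.2}) (isClosed_le (by fun_prop) (by fun_prop)) (IsClosed.inter (s₁ := {z : ℝ×ℝ | z.1 ≤ z.2}) (s₂ := {z : ℝ×ℝ | 3*z.1 ≤ -z.2}) (isClosed_le (by fun_prop) (by fun_prop)) (isClosed_le (by fun_prop) (by fun_prop) : IsClosed {z : ℝ×ℝ | 3*z.1 ≤ -z.2})))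
  have hOU3 : ContinuousOn wh {z : ℝ×ℝ | -z.2 ≤ z.1 ∧ z.1 ≤ z.2 ∧ 3*z.1 ≤ -z.2} :=
    ContinuousOn.congr (Continuous.continuousOn (f := fun z : ℝ×ℝ => (-z.2, 3*z.1 + 2*z.2)) (by fun_prop)) (fun z hz => wh_U3 hz.1 hz.2.1 hz.2.2)
  have hCRt : IsClosed {z : ℝ×ℝ | -z.1 ≤ z.2 ∧ z.2 ≤ z.1} := (IsClosed.inter (s₁ := {z : ℝ×ℝ | -z.1 ≤ z.2}) (s₂ := {z : ℝ×ℝ | z.2 ≤ z.1}) (isClosed_le (by fun_prop) (by fun_prop)) (isClosed_le (by fun_prop) (by fun_prop) : IsClosed {z : ℝ×ℝ | z.2 ≤ z.1}))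
  have hORt : ContinuousOn wh {z : ℝ×ℝ | -z.1 ≤ z.2 ∧ z.2 ≤ z.1} :=
    ContinuousOn.congr (Continuous.continuousOn (f := fun z : ℝ×ℝ => ((z.2 + 2*z.1)/3, -z.1)) (by fun_prop)) (fun z hz => wh_Rt hz.1 hz.2)
  have hCLf : IsClosed {z : ℝ×ℝ | z.1 ≤ z.2 ∧ z.1 ≤ -z.2} := (IsClosed.inter (s₁ := {z : ℝ×ℝ | z.1 ≤ z.2}) (s₂ := {z : ℝ×ℝ | z.1 ≤ -z.2}) (isClosed_le (by fun_prop) (by fun_prop)) (isClosed_le (by fun_prop) (by fun_prop) : IsClosed {z : ℝ×ℝ | z.1 ≤ -z.2}))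
  have hOLf : ContinuousOn wh {z : ℝ×ℝ | z.1 ≤ z.2 ∧ z.1 ≤ -z.2} :=
    ContinuousOn.congr (Continuous.continuousOn (f := fun z : ℝ×ℝ => ((2*z.1 - z.2)/3, z.1)) (by fun_prop)) (fun z hz => wh_Lf hz.1 hz.2)
  have hCLo : IsClosed {z : ℝ×ℝ | z.2 ≤ z.1 ∧ z.2 ≤ -z.1} := (IsClosed.inter (s₁ := {z : ℝ×ℝ | z.2 ≤ z.1}) (s₂ := {z : ℝ×ℝ | z.2 ≤ -z.1}) (isClosed_le (by fun_prop) (by fun_prop)) (isClosed_le (by fun_prop) (by fun_prop) : IsClosed {z : ℝ×ℝ | z.2 ≤ -z.1}))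
  have hOLo : ContinuousOn wh {z : ℝ×ℝ | z.2 ≤ z.1 ∧ z.2 ≤ -z.1} :=
    ContinuousOn.congr (Continuous.continuousOn (f := fun z : ℝ×ℝ => (z.1/3, z.2)) (by fun_prop)) (fun z hz => wh_Lo hz.1 hz.2)
  have hcov : (Set.univ : Set (ℝ×ℝ)) ⊆ ({z : ℝ×ℝ | -z.2 ≤ z.1 ∧ z.1 ≤ z.2 ∧ z.2 ≤ 3*z.1} ∪ ({z : ℝ×ℝ | -z.2 ≤ z.1 ∧ z.1 ≤ z.2 ∧ 3*z.1 ≤ z.2 ∧ -z.2 ≤ 3*z.1} ∪ ({z : ℝ×ℝ | -z.2 ≤ z.1 ∧ z.1 ≤ z.2 ∧ 3*z.1 ≤ -z.2} ∪ ({z : ℝ×ℝ | -z.1 ≤ z.2 ∧ z.2 ≤ z.1} ∪ ({z : ℝ×ℝ | z.1 ≤ z.2 ∧ z.1 ≤ -z.2} ∪ {z : ℝ×ℝ | z.2 ≤ z.1 ∧ z.2 ≤ -z.1}))))) := by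
    intro z _
    rcases le_total z.2 z.1 with c1 | c1 <;> rcases le_total (-z.1) z.2 with c2 | c2
    · exact Or.inr (Or.inr (Or.inr (Or.inl ⟨c2, c1⟩)))
    · exact Or.inr (Or.inr (Or.inr (Or.inr (Or.inr ⟨c1, c2⟩))))
    · rcases le_total z.2 (3*z.1) with c3 | c3
      · exact Or.inl ⟨by linarith, c1, c3⟩
      · rcases le_total (-z.2) (3*z.1) with c4 | c4
        · exact Or.inr (Or.inl ⟨by linarith, c1, c3, c4⟩)
        · exact Or.inr (Or.inr (Or.inl ⟨by linarith, c1, c4⟩))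
    · exact Or.inr (Or.inr (Or.inr (Or.inr (Or.inl ⟨c1, by linarith⟩))))
  exact ContinuousOn.mono (contOn_union hCU1 (hCU2.union (hCU3.union (hCRt.union (hCLf.union hCLo)))) hOU1 (contOn_union hCU2 (hCU3.union (hCRt.union (hCLf.union hCLo))) hOU2 (contOn_union hCU3 (hCRt.union (hCLf.union hCLo)) hOU3 (contOn_union hCRt (hCLf.union hCLo) hORt (contOn_union hCLf hCLo hOLf hOLo))))) hcov
noncomputable def σr (r : ℝ) : I := Set.projIcc 0 1 zero_le_one r

lemma σr_mem {r : ℝ} (h0 : 0 ≤ r) (h1 : r ≤ 1) : (σr r : ℝ) = r := by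
  simp [σr, Set.projIcc_of_mem zero_le_one ⟨h0, h1⟩]

lemma σr_coe (t : I) : σr (t : ℝ) = t := Subtype.ext (σr_mem t.2.1 t.2.2)

lemma σr_zero : σr 0 = 0 := by
  refine Subtype.ext ?_
  rw [σr_mem le_rfl zero_le_one]
  norm_num

lemma σr_one : σr 1 = 1 := by
  refine Subtype.ext ?_
  rw [σr_mem zero_le_one le_rfl]
  norm_num

lemma cont_σr : Continuous σr := continuous_projIcc (h := zero_le_one)

noncomputable def sqF : I × I → I × I := fun z =>
  (σr (((mh (2*(z.1:ℝ)-1, 2*(z.2:ℝ)-1)).1 + 1)/2),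
   σr (((mh (2*(z.1:ℝ)-1, 2*(z.2:ℝ)-1)).2 + 1)/2))

noncomputable def sqW : I × I → I × I := fun z =>
  (σr (((wh (2*(z.1:ℝ)-1, 2*(z.2:ℝ)-1)).1 + 1)/2),
   σr (((wh (2*(z.1:ℝ)-1, 2*(z.2:ℝ)-1)).2 + 1)/2))

lemma cont_inner : Continuous (fun z : I × I => ((2*(z.1:ℝ)-1, 2*(z.2:ℝ)-1) : ℝ × ℝ)) := by
  fun_prop

lemma cont_sqF : Continuous sqF := by
  have h : Continuous (fun z : I × I => mh (2*(z.1:ℝ)-1, 2*(z.2:ℝ)-1)) := cont_mh.comp cont_inner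
  exact (cont_σr.comp (((continuous_fst.comp h).add continuous_const).div_const 2)).prodMk
    (cont_σr.comp (((continuous_snd.comp h).add continuous_const).div_const 2))

lemma cont_sqW : Continuous sqW := by
  have h : Continuous (fun z : I × I => wh (2*(z.1:ℝ)-1, 2*(z.2:ℝ)-1)) := cont_wh.comp cont_inner
  exact (cont_σr.comp (((continuous_fst.comp h).add continuous_const).div_const 2)).prodMk
    (cont_σr.comp (((continuous_snd.comp h).add continuous_const).div_const 2))

lemma coe_lb (t : I) : -1 ≤ 2*(t:ℝ)-1 := by linarith [t.2.1]
lemma coe_ub (t : I) : 2*(t:ℝ)-1 ≤ 1 := by linarith [t.2.2]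

lemma sqF_sqW (z : I × I) : sqF (sqW z) = z := by
  obtain ⟨s, v⟩ := z
  obtain ⟨b1, b2, b3, b4⟩ := wh_mem (coe_lb s) (coe_ub s) (coe_lb v) (coe_ub v)
  unfold sqF sqW
  dsimp only
  rw [show (2*((σr (((wh (2*(s:ℝ)-1, 2*(v:ℝ)-1)).1+1)/2)):ℝ)-1 : ℝ)
        = (wh (2*(s:ℝ)-1, 2*(v:ℝ)-1)).1 from by rw [σr_mem (by linarith) (by linarith)]; ring,
      show (2*((σr (((wh (2*(s:ℝ)-1, 2*(v:ℝ)-1)).2+1)/2)):ℝ)-1 : ℝ)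
        = (wh (2*(s:ℝ)-1, 2*(v:ℝ)-1)).2 from by rw [σr_mem (by linarith) (by linarith)]; ring]
  rw [Prod.mk.eta, mh_wh]
  dsimp only
  rw [show ((2*(s:ℝ)-1)+1)/2 = (s:ℝ) from by ring, show ((2*(v:ℝ)-1)+1)/2 = (v:ℝ) from by ring,
    σr_coe, σr_coe]

lemma sqW_sqF_bot (s : I) : sqW (sqF (s, (0:I))) = (s, (0:I)) := by
  obtain ⟨b1, b2, b3, b4⟩ := mh_mem (x := 2*(s:ℝ)-1) (y := -1) (coe_lb s) (coe_ub s)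
    (by norm_num) (by norm_num)
  unfold sqF sqW
  dsimp only
  rw [show (2*((0:I):ℝ)-1 : ℝ) = -1 from by norm_num]
  rw [show (2*((σr (((mh (2*(s:ℝ)-1, -1)).1+1)/2)):ℝ)-1 : ℝ) = (mh (2*(s:ℝ)-1, -1)).1 from by
        rw [σr_mem (by linarith) (by linarith)]; ring,
      show (2*((σr (((mh (2*(s:ℝ)-1, -1)).2+1)/2)):ℝ)-1 : ℝ) = (mh (2*(s:ℝ)-1, -1)).2 from by
        rw [σr_mem (by linarith) (by linarith)]; ring]
  rw [Prod.mk.eta, wh_mh_bot (coe_lb s) (coe_ub s)]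
  dsimp only
  rw [show ((2*(s:ℝ)-1)+1)/2 = (s:ℝ) from by ring, σr_coe,
    show ((-1:ℝ)+1)/2 = (0:ℝ) from by norm_num, σr_zero]

lemma sqF_bot1 (s : I) (h : (s:ℝ) ≤ 1/3) : sqF (s, (0:I)) = ((0:I), σr (1 - 3*(s:ℝ))) := by
  unfold sqF
  dsimp only
  rw [show (2*((0:I):ℝ)-1 : ℝ) = -1 from by norm_num,
    mh_B1 (x := 2*(s:ℝ)-1) (y := -1) (by linarith [s.2.2]) (by linarith [s.2.1]) (by linarith)]
  dsimp only
  rw [show ((-1:ℝ)+1)/2 = (0:ℝ) from by norm_num, σr_zero,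
    show ((2*(-1:ℝ) - 3*(2*(s:ℝ)-1))+1)/2 = 1 - 3*(s:ℝ) from by ring]

lemma sqF_bot2 (s : I) (h1 : 1/3 ≤ (s:ℝ)) (h2 : (s:ℝ) ≤ 2/3) :
    sqF (s, (0:I)) = (σr (3*(s:ℝ) - 1), (0:I)) := by
  unfold sqF
  dsimp only
  rw [show (2*((0:I):ℝ)-1 : ℝ) = -1 from by norm_num,
    mh_B2 (x := 2*(s:ℝ)-1) (y := -1) (by linarith [s.2.2]) (by linarith [s.2.1])
      (by linarith) (by linarith)]
  dsimp only
  rw [show ((3*(2*(s:ℝ)-1))+1)/2 = 3*(s:ℝ) - 1 from by ring,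
    show ((-1:ℝ)+1)/2 = (0:ℝ) from by norm_num, σr_zero]

lemma sqF_bot3 (s : I) (h : 2/3 ≤ (s:ℝ)) : sqF (s, (0:I)) = ((1:I), σr (3*(s:ℝ) - 2)) := by
  unfold sqF
  dsimp only
  rw [show (2*((0:I):ℝ)-1 : ℝ) = -1 from by norm_num,
    mh_B3 (x := 2*(s:ℝ)-1) (y := -1) (by linarith [s.2.2]) (by linarith [s.2.1]) (by linarith)]
  dsimp only
  rw [show ((- -1:ℝ)+1)/2 = (1:ℝ) from by norm_num, σr_one,
    show ((3*(2*(s:ℝ)-1) + 2*(-1:ℝ))+1)/2 = 3*(s:ℝ) - 2 from by ring]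


lemma coeI_zero : (((0:I)):ℝ) = 0 := rfl
lemma coeI_one : (((1:I)):ℝ) = 1 := rfl

noncomputable def glueC {X Y : Type} [TopologicalSpace X] [TopologicalSpace Y]
    (K₁ K₂ : C(X × I, Y)) (hc : ∀ x, K₁ (x,1) = K₂ (x,0)) : C(X × I, Y) :=
  ⟨fun z => if ((z.2:ℝ)) ≤ 1/2 then K₁ (z.1, σr (2*(z.2:ℝ))) else K₂ (z.1, σr (2*(z.2:ℝ) - 1)), by
    refine Continuous.if_le ?_ ?_ (by fun_prop) continuous_const ?_
    · exact K₁.continuous.comp (continuous_fst.prodMk (cont_σr.comp (by fun_prop)))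
    · exact K₂.continuous.comp (continuous_fst.prodMk (cont_σr.comp (by fun_prop)))
    · intro z hz
      have h1 : σr (2*(z.2:ℝ)) = 1 := by rw [hz]; rw [show (2*(1/2 : ℝ) : ℝ) = 1 from by norm_num, σr_one]
      have h2 : σr (2*(z.2:ℝ) - 1) = 0 := by
        rw [hz]; rw [show (2*(1/2 : ℝ) - 1 : ℝ) = 0 from by norm_num, σr_zero]
      rw [h1, h2, hc]⟩

lemma glueC_left {X Y : Type} [TopologicalSpace X] [TopologicalSpace Y]
    {K₁ K₂ : C(X × I, Y)} {hc : ∀ x, K₁ (x,1) = K₂ (x,0)} (x : X) (t : I) (h : (t:ℝ) ≤ 1/2) :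
    glueC K₁ K₂ hc (x, t) = K₁ (x, σr (2*(t:ℝ))) := by
  dsimp [glueC]; rw [if_pos h]

lemma glueC_right {X Y : Type} [TopologicalSpace X] [TopologicalSpace Y]
    {K₁ K₂ : C(X × I, Y)} {hc : ∀ x, K₁ (x,1) = K₂ (x,0)} (x : X) (t : I) (h : ¬ ((t:ℝ) ≤ 1/2)) :
    glueC K₁ K₂ hc (x, t) = K₂ (x, σr (2*(t:ℝ) - 1)) := by
  dsimp [glueC]; rw [if_neg h]

lemma glueC_zero {X Y : Type} [TopologicalSpace X] [TopologicalSpace Y]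
    {K₁ K₂ : C(X × I, Y)} {hc : ∀ x, K₁ (x,1) = K₂ (x,0)} (x : X) :
    glueC K₁ K₂ hc (x, 0) = K₁ (x, 0) := by
  rw [glueC_left x 0 (by rw [coeI_zero]; norm_num), show (2*(((0:I)):ℝ) : ℝ) = 0 from by
    rw [coeI_zero]; norm_num, σr_zero]

lemma glueC_one {X Y : Type} [TopologicalSpace X] [TopologicalSpace Y]
    {K₁ K₂ : C(X × I, Y)} {hc : ∀ x, K₁ (x,1) = K₂ (x,0)} (x : X) :
    glueC K₁ K₂ hc (x, 1) = K₂ (x, 1) := by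
  rw [glueC_right x 1 (by rw [coeI_one]; norm_num), show (2*(((1:I)):ℝ) - 1 : ℝ) = 1 from by
    rw [coeI_one]; norm_num, σr_one]

variable {E B : Type} [TopologicalSpace E] [TopologicalSpace B]

def VH (p : C(E,B)) {X : Type} [TopologicalSpace X] (a b : C(X,E)) : Prop :=
  ∃ V : C(X × I, E), (∀ z : X × I, p (V z) = p (a z.1)) ∧
    (∀ x, V (x,0) = a x) ∧ (∀ x, V (x,1) = b x)

lemma VH_base {p : C(E,B)} {X : Type} [TopologicalSpace X] {a b : C(X,E)}
    (h : VH p a b) (x : X) : p (b x) = p (a x) := by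
  obtain ⟨V, hv, h0, h1⟩ := h
  rw [← h1 x]; exact hv (x,1)

lemma VH.symm {p : C(E,B)} {X : Type} [TopologicalSpace X] {a b : C(X,E)}
    (h : VH p a b) : VH p b a := by
  obtain ⟨V, hv, h0, h1⟩ := h
  refine ⟨⟨fun z => V (z.1, unitInterval.symm z.2),
    V.continuous.comp (continuous_fst.prodMk (unitInterval.continuous_symm.comp continuous_snd))⟩,
    fun z => ?_, fun x => ?_, fun x => ?_⟩
  · dsimp only [ContinuousMap.coe_mk]
    rw [hv (z.1, unitInterval.symm z.2)]
    exact (VH_base ⟨V, hv, h0, h1⟩ z.1).symm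
  · dsimp only [ContinuousMap.coe_mk]; rw [unitInterval.symm_zero, h1]
  · dsimp only [ContinuousMap.coe_mk]; rw [unitInterval.symm_one, h0]

lemma VH.trans {p : C(E,B)} {X : Type} [TopologicalSpace X] {a b c : C(X,E)}
    (h1 : VH p a b) (h2 : VH p b c) : VH p a c := by
  obtain ⟨V₁, hv₁, h0₁, h1₁⟩ := h1
  obtain ⟨V₂, hv₂, h0₂, h1₂⟩ := h2
  have hcc : ∀ x, V₁ (x,1) = V₂ (x,0) := fun x => by rw [h1₁, h0₂]
  refine ⟨glueC V₁ V₂ hcc, fun z => ?_, fun x => ?_, fun x => ?_⟩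
  · obtain ⟨x, t⟩ := z
    rcases le_or_gt (t:ℝ) (1/2) with h | h
    · rw [glueC_left x t h]; exact hv₁ _
    · rw [glueC_right x t (not_le.mpr h)]
      rw [hv₂ (x, σr (2*(t:ℝ) - 1))]
      exact VH_base ⟨V₁, hv₁, h0₁, h1₁⟩ x
  · rw [glueC_zero, h0₁]
  · rw [glueC_one, h1₂]

lemma VH.precomp {p : C(E,B)} {X X' : Type} [TopologicalSpace X] [TopologicalSpace X']
    {a b : C(X,E)} (h : VH p a b) (u : C(X',X)) : VH p (a.comp u) (b.comp u) := by
  obtain ⟨V, hv, h0, h1⟩ := h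
  exact ⟨⟨fun z => V (u z.1, z.2),
      V.continuous.comp ((u.continuous.comp continuous_fst).prodMk continuous_snd)⟩,
    fun z => hv (u z.1, z.2), fun x => h0 (u x), fun x => h1 (u x)⟩

lemma VH.postcomp {p : C(E,B)} {X : Type} [TopologicalSpace X]
    {a b : C(X,E)} (h : VH p a b) (w : C(E,E)) (hw : ∀ e, p (w e) = p e) :
    VH p (w.comp a) (w.comp b) := by
  obtain ⟨V, hv, h0, h1⟩ := h
  refine ⟨⟨fun z => w (V z), w.continuous.comp V.continuous⟩,
    fun z => ?_, fun x => by dsimp only [ContinuousMap.coe_mk]; rw [h0]; rfl,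
    fun x => by dsimp only [ContinuousMap.coe_mk]; rw [h1]; rfl⟩
  · dsimp only [ContinuousMap.coe_mk]
    rw [hw (V z), hv z, ContinuousMap.comp_apply, hw (a z.1)]

lemma VH.congr {p : C(E,B)} {X : Type} [TopologicalSpace X]
    {a b a' b' : C(X,E)} (h : VH p a b) (ha : ∀ x, a x = a' x) (hb : ∀ x, b x = b' x) :
    VH p a' b' := by
  obtain ⟨V, hv, h0, h1⟩ := h
  exact ⟨V, fun z => by rw [hv, ha], fun x => by rw [h0, ha], fun x => by rw [h1, hb]⟩


lemma SQ {E B : Type} [TopologicalSpace E] [TopologicalSpace B] (p : C(E,B))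
    (hp : IsHurewiczFibration p) (X : Type) [TopologicalSpace X]
    (H : C(X × (I × I), B)) (M S₀ S₁ : C(X × I, E))
    (hM : ∀ x t, p (M (x,t)) = H (x,(t,0)))
    (hS₀ : ∀ x u, p (S₀ (x,u)) = H (x,(0,u)))
    (hS₁ : ∀ x u, p (S₁ (x,u)) = H (x,(1,u)))
    (hc₀ : ∀ x, S₀ (x,0) = M (x,0)) (hc₁ : ∀ x, S₁ (x,0) = M (x,1)) :
    ∃ G : C(X × (I×I), E), (∀ z, p (G z) = H z) ∧
      (∀ x t, G (x,(t,0)) = M (x,t)) ∧ (∀ x u, G (x,(0,u)) = S₀ (x,u)) ∧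
      (∀ x u, G (x,(1,u)) = S₁ (x,u)) := by
  have c₀ : Continuous (fun z : X × I => S₀ (z.1, σr (1 - 3*(z.2:ℝ)))) :=
    S₀.continuous.comp (continuous_fst.prodMk (cont_σr.comp (by fun_prop)))
  have cM : Continuous (fun z : X × I => M (z.1, σr (3*(z.2:ℝ) - 1))) :=
    M.continuous.comp (continuous_fst.prodMk (cont_σr.comp (by fun_prop)))
  have c₁ : Continuous (fun z : X × I => S₁ (z.1, σr (3*(z.2:ℝ) - 2))) :=
    S₁.continuous.comp (continuous_fst.prodMk (cont_σr.comp (by fun_prop)))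
  have cInner : Continuous (fun z : X × I =>
      if ((z.2:ℝ)) ≤ 2/3 then M (z.1, σr (3*(z.2:ℝ) - 1)) else S₁ (z.1, σr (3*(z.2:ℝ) - 2))) := by
    refine Continuous.if_le cM c₁ (by fun_prop) continuous_const ?_
    intro z hz
    rw [hz, show (3*(2/3:ℝ) - 1 : ℝ) = 1 from by norm_num, σr_one,
      show (3*(2/3:ℝ) - 2 : ℝ) = 0 from by norm_num, σr_zero]
    exact (hc₁ z.1).symm
  have cOuter : Continuous (fun z : X × I =>
      if ((z.2:ℝ)) ≤ 1/3 then S₀ (z.1, σr (1 - 3*(z.2:ℝ)))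
      else if ((z.2:ℝ)) ≤ 2/3 then M (z.1, σr (3*(z.2:ℝ) - 1))
      else S₁ (z.1, σr (3*(z.2:ℝ) - 2))) := by
    refine Continuous.if_le c₀ cInner (by fun_prop) continuous_const ?_
    intro z hz
    rw [hz, show (1 - 3*(1/3:ℝ) : ℝ) = 0 from by norm_num, σr_zero,
      if_pos (by norm_num : (1/3:ℝ) ≤ 2/3),
      show (3*(1/3:ℝ) - 1 : ℝ) = 0 from by norm_num, σr_zero]
    exact hc₀ z.1
  set h₀ : C(X × I, E) := ⟨fun z =>
      if ((z.2:ℝ)) ≤ 1/3 then S₀ (z.1, σr (1 - 3*(z.2:ℝ)))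
      else if ((z.2:ℝ)) ≤ 2/3 then M (z.1, σr (3*(z.2:ℝ) - 1))
      else S₁ (z.1, σr (3*(z.2:ℝ) - 2)), cOuter⟩ with hdef
  set Hm : C((X × I) × I, B) := ⟨fun z => H (z.1.1, sqF (z.1.2, z.2)),
    H.continuous.comp ((continuous_fst.comp continuous_fst).prodMk
      (cont_sqF.comp ((continuous_snd.comp continuous_fst).prodMk continuous_snd)))⟩ with hHmdef
  have hinit : ∀ t : X × I, p (h₀ t) = Hm (t, 0) := by
    rintro ⟨x, s⟩
    simp only [hdef, hHmdef, ContinuousMap.coe_mk]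
    split_ifs with d1 d2
    · rw [sqF_bot1 s d1]; exact hS₀ x _
    · rw [sqF_bot2 s (by linarith [not_le.mp d1]) d2]; exact hM x _
    · rw [sqF_bot3 s (by linarith [not_le.mp d2])]; exact hS₁ x _
  obtain ⟨Ht, hHt, hHt0⟩ := hp (X × I) Hm h₀ hinit
  refine ⟨⟨fun z => Ht ((z.1, (sqW z.2).1), (sqW z.2).2),
      Ht.continuous.comp ((continuous_fst.prodMk
        (continuous_fst.comp (cont_sqW.comp continuous_snd))).prodMk
        (continuous_snd.comp (cont_sqW.comp continuous_snd)))⟩, ?_, ?_, ?_, ?_⟩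
  · intro z
    dsimp only [ContinuousMap.coe_mk]
    rw [hHt (((z.1, (sqW z.2).1), (sqW z.2).2))]
    simp only [hHmdef, ContinuousMap.coe_mk]
    rw [show ((sqW z.2).1, (sqW z.2).2) = sqW z.2 from Prod.mk.eta, sqF_sqW]
  · intro x t
    have hsv : ((σr (((t:ℝ)+1)/3)):ℝ) = ((t:ℝ)+1)/3 :=
      σr_mem (by linarith [t.2.1]) (by linarith [t.2.2])
    have hrep : sqF (σr (((t:ℝ)+1)/3), 0) = (t, 0) := by
      rw [sqF_bot2 _ (by rw [hsv]; linarith [t.2.1]) (by rw [hsv]; linarith [t.2.2]),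
        show (3*((σr (((t:ℝ)+1)/3)):ℝ) - 1 : ℝ) = (t:ℝ) from by rw [hsv]; ring, σr_coe]
    have hw : sqW (t, 0) = (σr (((t:ℝ)+1)/3), 0) := by rw [← hrep, sqW_sqF_bot]
    dsimp only [ContinuousMap.coe_mk]
    rw [hw]
    rw [hHt0 (x, σr (((t:ℝ)+1)/3))]
    simp only [hdef, ContinuousMap.coe_mk, hsv]
    split_ifs with d1 d2
    · have ht0 : (t:ℝ) = 0 := le_antisymm (by linarith) t.2.1
      rw [show (1 - 3*(((t:ℝ)+1)/3) : ℝ) = 0 from by rw [ht0]; norm_num, σr_zero, hc₀,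
        show (0:I) = t from Subtype.ext (by rw [coeI_zero, ht0])]
    · rw [show (3*(((t:ℝ)+1)/3) - 1 : ℝ) = (t:ℝ) from by ring, σr_coe]
    · exfalso; have := not_le.mp d2; linarith [t.2.2]
  · intro x u
    have hsv : ((σr ((1-(u:ℝ))/3)):ℝ) = (1-(u:ℝ))/3 :=
      σr_mem (by linarith [u.2.2]) (by linarith [u.2.1])
    have hrep : sqF (σr ((1-(u:ℝ))/3), 0) = (0, u) := by
      rw [sqF_bot1 _ (by rw [hsv]; linarith [u.2.1]),
        show (1 - 3*((σr ((1-(u:ℝ))/3)):ℝ) : ℝ) = (u:ℝ) from by rw [hsv]; ring, σr_coe]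
    have hw : sqW ((0:I), u) = (σr ((1-(u:ℝ))/3), 0) := by rw [← hrep, sqW_sqF_bot]
    dsimp only [ContinuousMap.coe_mk]
    rw [hw]
    rw [hHt0 (x, σr ((1-(u:ℝ))/3))]
    simp only [hdef, ContinuousMap.coe_mk, hsv]
    rw [if_pos (by linarith [u.2.1] : (1-(u:ℝ))/3 ≤ 1/3),
      show (1 - 3*((1-(u:ℝ))/3) : ℝ) = (u:ℝ) from by ring, σr_coe]
  · intro x u
    have hsv : ((σr (((u:ℝ)+2)/3)):ℝ) = ((u:ℝ)+2)/3 :=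
      σr_mem (by linarith [u.2.1]) (by linarith [u.2.2])
    have hrep : sqF (σr (((u:ℝ)+2)/3), 0) = (1, u) := by
      rw [sqF_bot3 _ (by rw [hsv]; linarith [u.2.1]),
        show (3*((σr (((u:ℝ)+2)/3)):ℝ) - 2 : ℝ) = (u:ℝ) from by rw [hsv]; ring, σr_coe]
    have hw : sqW ((1:I), u) = (σr (((u:ℝ)+2)/3), 0) := by rw [← hrep, sqW_sqF_bot]
    dsimp only [ContinuousMap.coe_mk]
    rw [hw]
    rw [hHt0 (x, σr (((u:ℝ)+2)/3))]
    simp only [hdef, ContinuousMap.coe_mk, hsv]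
    rw [if_neg (by push_neg; linarith [u.2.1] : ¬ (((u:ℝ)+2)/3 ≤ 1/3))]
    split_ifs with d2
    · have hu0 : (u:ℝ) = 0 := le_antisymm (by linarith) u.2.1
      rw [show (3*(((u:ℝ)+2)/3) - 1 : ℝ) = 1 from by rw [hu0]; norm_num, σr_one, ← hc₁,
        show (0:I) = u from Subtype.ext (by rw [coeI_zero, hu0])]
    · rw [show (3*(((u:ℝ)+2)/3) - 2 : ℝ) = (u:ℝ) from by ring, σr_coe]


lemma keyL {E B : Type} [TopologicalSpace E] [TopologicalSpace B] (p : C(E,B))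
    (hp : IsHurewiczFibration p) (f : C(E,E)) (hf : ∀ x, p (f x) = p x)
    (Φ : C(E × I, E)) (hΦ0 : ∀ x, Φ (x,0) = x) (hΦ1 : ∀ x, Φ (x,1) = f x) :
    ∃ r : C(E,E), (∀ x, p (r x) = p x) ∧
      (∃ K : C(E × I, E), (∀ x, K (x,0) = x) ∧ (∀ x, K (x,1) = r x)) ∧
      VH p (ContinuousMap.id E) (r.comp f) := by
  set Hm1 : C(E × I, B) := ⟨fun z => p (Φ (z.1, unitInterval.symm z.2)),
    p.continuous.comp (Φ.continuous.comp (continuous_fst.prodMk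
      (unitInterval.continuous_symm.comp continuous_snd)))⟩ with hHm1
  have hinit : ∀ x : E, p ((ContinuousMap.id E) x) = Hm1 (x, 0) := by
    intro x
    simp only [hHm1, ContinuousMap.coe_mk, ContinuousMap.id_apply, unitInterval.symm_zero, hΦ1, hf]
  obtain ⟨K, hK, hK0⟩ := hp E Hm1 (ContinuousMap.id E) hinit
  have hK' : ∀ x (t : I), p (K (x,t)) = p (Φ (x, unitInterval.symm t)) := by
    intro x t
    have := hK (x,t)
    simpa only [hHm1, ContinuousMap.coe_mk] using this
  set r : C(E,E) := ⟨fun x => K (x,1), K.continuous.comp (continuous_id.prodMk continuous_const)⟩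
    with hrdef
  have hr : ∀ x, p (r x) = p x := by
    intro x
    simp only [hrdef, ContinuousMap.coe_mk]
    rw [hK' x 1, unitInterval.symm_one, hΦ0]
  set RΦ : C(E × I, E) := ⟨fun z => r (Φ z), r.continuous.comp Φ.continuous⟩ with hRΦ
  have hcc : ∀ x, K (x,1) = RΦ (x,0) := by
    intro x; simp only [hRΦ, ContinuousMap.coe_mk, hΦ0]; rfl
  set N : C(E × (I × I), B) := ⟨fun z => p (Φ (z.1, σr (max |2*((z.2.1:ℝ)) - 1| (z.2.2:ℝ)))),
    p.continuous.comp (Φ.continuous.comp (continuous_fst.prodMk (cont_σr.comp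
      (Continuous.max (by fun_prop) (by fun_prop)))))⟩ with hN
  set S₀ : C(E × I, E) := ⟨fun z => z.1, continuous_fst⟩ with hS₀def
  set S₁ : C(E × I, E) := ⟨fun z => r (f z.1), r.continuous.comp (f.continuous.comp continuous_fst)⟩
    with hS₁def
  have habs_le : ∀ t : I, |2*(t:ℝ) - 1| ≤ 1 :=
    fun t => abs_le.mpr ⟨by linarith [t.2.1], by linarith [t.2.2]⟩
  have habs_nonneg : ∀ t : I, (0:ℝ) ≤ |2*(t:ℝ) - 1| := fun t => abs_nonneg _
  have hMhyp : ∀ x t, p ((glueC K RΦ hcc) (x,t)) = N (x,(t,0)) := by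
    intro x t
    simp only [hN, ContinuousMap.coe_mk]
    rw [coeI_zero, max_eq_left (habs_nonneg t)]
    rcases le_or_gt (t:ℝ) (1/2) with h | h
    · rw [glueC_left x t h, hK' x _,
        show unitInterval.symm (σr (2*(t:ℝ))) = σr (|2*(t:ℝ) - 1|) from Subtype.ext (by
          rw [unitInterval.coe_symm_eq, σr_mem (by linarith [t.2.1]) (by linarith),
            σr_mem (habs_nonneg t) (habs_le t), abs_of_nonpos (by linarith)]
          ring)]
    · rw [glueC_right x t (not_le.mpr h)]
      simp only [hRΦ, ContinuousMap.coe_mk]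
      rw [hr,
        show σr (2*(t:ℝ) - 1) = σr (|2*(t:ℝ) - 1|) from Subtype.ext (by
          rw [σr_mem (by linarith) (by linarith [t.2.2]),
            σr_mem (habs_nonneg t) (habs_le t), abs_of_nonneg (by linarith)])]
  have hS₀hyp : ∀ x (u : I), p (S₀ (x,u)) = N (x,((0:I),u)) := by
    intro x u
    simp only [hS₀def, hN, ContinuousMap.coe_mk]
    rw [coeI_zero, show |2*(0:ℝ) - 1| = 1 from by norm_num, max_eq_left u.2.2, σr_one, hΦ1, hf]
  have hS₁hyp : ∀ x (u : I), p (S₁ (x,u)) = N (x,((1:I),u)) := by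
    intro x u
    simp only [hS₁def, hN, ContinuousMap.coe_mk]
    rw [coeI_one, show |2*(1:ℝ) - 1| = 1 from by norm_num, max_eq_left u.2.2, σr_one, hΦ1, hr]
  have hc₀ : ∀ x, S₀ (x,0) = (glueC K RΦ hcc) (x,0) := by
    intro x
    rw [glueC_zero]
    simp only [hS₀def, ContinuousMap.coe_mk]
    exact (hK0 x).symm
  have hc₁ : ∀ x, S₁ (x,0) = (glueC K RΦ hcc) (x,1) := by
    intro x
    rw [glueC_one]
    simp only [hS₁def, hRΦ, ContinuousMap.coe_mk, hΦ1]
  obtain ⟨G, hG, hGb, hG0, hG1⟩ := SQ p hp E N (glueC K RΦ hcc) S₀ S₁ hMhyp hS₀hyp hS₁hyp hc₀ hc₁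
  refine ⟨r, hr, ⟨K, hK0, fun x => rfl⟩,
    ⟨⟨fun z => G (z.1, (z.2, 1)), G.continuous.comp (continuous_fst.prodMk
      (continuous_snd.prodMk continuous_const))⟩, ?_, ?_, ?_⟩⟩
  · intro z
    dsimp only [ContinuousMap.coe_mk]
    rw [hG (z.1, (z.2, 1))]
    simp only [hN, ContinuousMap.coe_mk, ContinuousMap.id_apply]
    rw [coeI_one, max_eq_right (habs_le z.2), σr_one, hΦ1, hf]
  · intro x
    dsimp only [ContinuousMap.coe_mk]
    rw [hG0 x 1]
    simp only [hS₀def, ContinuousMap.coe_mk, ContinuousMap.id_apply]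
  · intro x
    dsimp only [ContinuousMap.coe_mk]
    rw [hG1 x 1]
    simp only [hS₁def, ContinuousMap.coe_mk, ContinuousMap.comp_apply]


theorem main {E B A : Type} [TopologicalSpace E] [TopologicalSpace B] [TopologicalSpace A]
    (p : C(E, B)) (hp : IsHurewiczFibration p) (hpe : IsHomotopyEquiv p) (f : C(A, B)) :
    IsHomotopyEquiv
      (⟨fun q : {q : A × E // f q.1 = p q.2} => q.1.1,
        continuous_fst.comp continuous_subtype_val⟩ :
        C({q : A × E // f q.1 = p q.2}, A)) := by
  obtain ⟨g₀, hg₀p, hpg₀⟩ := hpe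
  obtain ⟨Ψ⟩ := hpg₀
  set HmB : C(B × I, B) := ⟨fun z => Ψ (z.2, z.1),
    Ψ.continuous.comp (continuous_snd.prodMk continuous_fst)⟩ with hHmB
  have hinitB : ∀ b : B, p (g₀ b) = HmB (b, 0) := by
    intro b
    simp only [hHmB, ContinuousMap.coe_mk]
    rw [Ψ.apply_zero]; rfl
  obtain ⟨Ht, hHt, hHt0⟩ := hp B HmB g₀ hinitB
  set s : C(B,E) := ⟨fun b => Ht (b,1), Ht.continuous.comp (continuous_id.prodMk continuous_const)⟩
    with hsdef
  have hps : ∀ b, p (s b) = b := by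
    intro b
    have h := hHt (b,1)
    simp only [hHmB, ContinuousMap.coe_mk] at h
    simp only [hsdef, ContinuousMap.coe_mk]
    rw [h, Ψ.apply_one]; rfl
  have e1 : p.comp s = ContinuousMap.id B := ContinuousMap.ext hps
  have hsg : ContinuousMap.Homotopic s g₀ := by
    have h2 := ContinuousMap.Homotopic.comp hg₀p (ContinuousMap.Homotopic.refl s)
    rw [ContinuousMap.comp_assoc, e1, ContinuousMap.comp_id, ContinuousMap.id_comp] at h2
    exact h2.symm
  have hsp : (s.comp p).Homotopic (ContinuousMap.id E) :=
    (ContinuousMap.Homotopic.comp hsg (ContinuousMap.Homotopic.refl p)).trans hg₀p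
  obtain ⟨Φ'⟩ := hsp.symm
  set Φ : C(E × I, E) := ⟨fun z => Φ' (z.2, z.1),
    Φ'.continuous.comp (continuous_snd.prodMk continuous_fst)⟩ with hΦdef
  have hΦ0 : ∀ x, Φ (x,0) = x := fun x => by
    simp only [hΦdef, ContinuousMap.coe_mk]; rw [Φ'.apply_zero]; rfl
  have hΦ1 : ∀ x, Φ (x,1) = (s.comp p) x := fun x => by
    simp only [hΦdef, ContinuousMap.coe_mk]; rw [Φ'.apply_one]
  obtain ⟨r, hr, ⟨K, hK0, hK1⟩, V₁⟩ := keyL p hp (s.comp p) (fun x => hps (p x)) Φ hΦ0 hΦ1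
  have Vr : VH p r (r.comp (s.comp p)) := by
    refine (V₁.precomp r).congr (fun x => rfl) (fun x => ?_)
    show r (s (p (r x))) = r (s (p x))
    rw [hr x]
  have Vr_id : VH p r (ContinuousMap.id E) := Vr.trans V₁.symm
  have Vf : VH p (r.comp (s.comp p)) (s.comp p) := by
    have h := Vr_id.precomp (s.comp p)
    exact h.congr (fun x => rfl) (fun x => rfl)
  have Vsp : VH p (s.comp p) (ContinuousMap.id E) := (V₁.trans Vf).symm
  obtain ⟨V, hVert, hV0, hV1⟩ := Vsp
  have hVert' : ∀ (e : E) (t : I), p (V (e,t)) = p e := by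
    intro e t
    rw [hVert (e,t)]
    show p ((s.comp p) e) = p e
    rw [ContinuousMap.comp_apply]
    exact hps (p e)
  set g : C(A, {q : A × E // f q.1 = p q.2}) := ⟨fun a => ⟨(a, s (f a)), (hps (f a)).symm⟩,
    Continuous.subtype_mk (continuous_id.prodMk (s.continuous.comp f.continuous)) _⟩ with hg
  refine ⟨g, ?_, ?_⟩
  · refine ⟨⟨⟨fun z => ⟨(z.2.1.1, V (z.2.1.2, z.1)), by
        rw [hVert' z.2.1.2 z.1]; exact z.2.2⟩, ?_⟩, ?_, ?_⟩⟩
    · refine Continuous.subtype_mk (Continuous.prodMk ?_ ?_) _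
      · exact continuous_fst.comp (continuous_subtype_val.comp continuous_snd)
      · exact V.continuous.comp
          ((continuous_snd.comp (continuous_subtype_val.comp continuous_snd)).prodMk
            continuous_fst)
    · intro q
      refine Subtype.ext (Prod.ext rfl ?_)
      show V (q.1.2, 0) = _
      simp only [hg, ContinuousMap.coe_mk, ContinuousMap.comp_apply]
      rw [hV0]
      show s (p q.1.2) = s (f q.1.1)
      rw [← q.2]
    · intro q
      exact Subtype.ext (Prod.ext rfl (hV1 q.1.2))
  · have he : ((⟨fun q : {q : A × E // f q.1 = p q.2} => q.1.1,
        continuous_fst.comp continuous_subtype_val⟩ :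
        C({q : A × E // f q.1 = p q.2}, A)).comp g) = ContinuousMap.id A :=
      ContinuousMap.ext (fun a => rfl)
    rw [he]

end HPB
end

/-- The pullback of a Hurewicz fibration which is a homotopy equivalence is
again a homotopy equivalence (namely the projection of the pullback to the base). -/
theorem pullback_of_hurewicz_homotopy_equiv
    {E B A : Type} [TopologicalSpace E] [TopologicalSpace B] [TopologicalSpace A]
    (p : C(E, B)) (hp : IsHurewiczFibration p) (hpe : IsHomotopyEquiv p) (f : C(A, B)) :
    IsHomotopyEquiv
      (⟨fun q : {q : A × E // f q.1 = p q.2} => q.1.1,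
        continuous_fst.comp continuous_subtype_val⟩ :
        C({q : A × E // f q.1 = p q.2}, A)) := by
  exact HPB.main p hp hpe f
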